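/- Let n > 2 be an integer, α ∈ (0,1] and p ∈ [0,1]^n with q = (1/n) Σ_{i=1}^n p_i < 1/2. Let G be uniform on {+1,−1} and, conditionally on G, let X_1,…,X_n be independent with X_i = G with probability α(1−p_i), X_i = −G with probability α p_i, and X_i = 0 with probability 1−α. Let Ĝ = 1{S > 0} − 1{S < 0} + Z·1{S = 0} where S = Σ_{i=1}^n X_i and Z is uniform on {+1,−1} independent of (G, X). Then P(Ĝ ≠ G) ≤ exp(−(n/2)(α(1−2q))²). -/

import Mathlib

open MeasureTheory Finset
open scoped Classical

/-- Joint probability of `(G, X) = (g, x)` for one task in the crowdsourcing model: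
`G` is uniform on `{+1,−1}` and, given `G = g`, the labels are independent with
`X_i = g` w.p. `α(1−p_i)`, `X_i = −g` w.p. `α p_i`, `X_i = 0` w.p. `1−α`. -/
noncomputable def taskScore (n : ℕ) (α : ℝ) (p : Fin n → ℝ) (g : ℤ) (x : Fin n → ℤ) : ℝ :=
  (1 / 2 : ℝ) * ∏ i, (if x i = g then α * (1 - p i) else if x i = -g then α * p i else 1 - α)


lemma endpoint_ineq {s : ℝ} (h0 : 0 ≤ s) (h1 : s ≤ 1) :
    (1+s)*Real.exp (-s) + (1-s)*Real.exp s - 2 + s^2 ≤ 0 := by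
  set f : ℝ → ℝ := fun x => (1+x)*Real.exp (-x) + (1-x)*Real.exp x - 2 + x^2 with hf
  have hderiv : ∀ x : ℝ, HasDerivAt f
      (1 * Real.exp (-x) + (1+x) * (Real.exp (-x) * (-1)) +
        ((-1) * Real.exp x + (1-x) * Real.exp x) + 2*x^1) x := by
    intro x
    have h1 : HasDerivAt (fun x : ℝ => Real.exp (-x)) (Real.exp (-x) * (-1)) x :=
      (hasDerivAt_neg x).exp
    have h2 : HasDerivAt (fun x : ℝ => (1+x)) 1 x := (hasDerivAt_id x).const_add 1
    have h3 : HasDerivAt (fun x : ℝ => (1-x)) (-1) x := (hasDerivAt_id x).const_sub 1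
    have h4 := ((h2.mul h1).add ((h3.mul (Real.hasDerivAt_exp x)))).add (hasDerivAt_pow 2 x)
    have h5 := (h4.sub_const 2)
    convert h5 using 2
    · rfl
    · rfl
    · simp only [hf, Pi.add_apply, Pi.mul_apply]; ring
    · ring_nf
  have hmono : AntitoneOn f (Set.Icc (0:ℝ) 1) := by
    apply antitoneOn_of_deriv_nonpos (convex_Icc 0 1)
    · exact fun x _ => ((hderiv x).continuousAt).continuousWithinAt
    · exact fun x _ => ((hderiv x).differentiableAt).differentiableWithinAt
    · intro x hx
      rw [interior_Icc] at hx
      rw [(hderiv x).deriv]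
      nlinarith [Real.add_one_le_exp x, Real.add_one_le_exp (-x), hx.1, hx.2]
  have h00 : f 0 = 0 := by simp [hf]; norm_num
  have := hmono (Set.left_mem_Icc.2 (by norm_num)) (Set.mem_Icc.2 ⟨h0, h1⟩) h0
  rw [h00] at this
  exact this

lemma key_ineq {q t : ℝ} (hq0 : 0 ≤ q) (hq : q ≤ 1/2) (ht0 : 0 ≤ t) (hts : t ≤ 1 - 2*q) :
    (1-q)*Real.exp (-t) + q*Real.exp t - 1 ≤ -((1-2*q)*t/2) := by
  set s : ℝ := 1 - 2*q with hs
  clear_value s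
  have hs1 : s ≤ 1 := by simp [hs]; linarith
  have hs0 : 0 ≤ s := le_trans ht0 hts
  rcases eq_or_lt_of_le hs0 with hseq | hspos
  · have htz : t = 0 := le_antisymm (by rw [← hseq] at hts; exact hts) ht0
    have : q = 1/2 := by rw [hs] at hseq; linarith
    simp [htz, this]
  · set l : ℝ := t / s with hl
    have hl0 : 0 ≤ l := div_nonneg ht0 hs0
    have hl1 : l ≤ 1 := (div_le_one hspos).2 hts
    have hls : l * s = t := div_mul_cancel₀ t (ne_of_gt hspos)
    have hcx := convexOn_exp.2 (Set.mem_univ (0:ℝ)) (Set.mem_univ (-s))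
      (by linarith : (0:ℝ) ≤ 1 - l) hl0 (by ring)
    have hcx2 := convexOn_exp.2 (Set.mem_univ (0:ℝ)) (Set.mem_univ s)
      (by linarith : (0:ℝ) ≤ 1 - l) hl0 (by ring)
    simp only [smul_eq_mul, mul_zero, zero_add, Real.exp_zero, mul_one] at hcx hcx2
    have hend := endpoint_ineq hs0 hs1
    have hqs : q = (1 - s)/2 := by rw [hs]; ring
    have hexp : Real.exp (-t) ≤ (1-l) + l * Real.exp (-s) := by
      have : l * -s = -t := by rw [← hls]; ring
      rw [this] at hcx; linarith
    have hexp2 : Real.exp t ≤ (1-l) + l * Real.exp s := by rw [hls] at hcx2; exact hcx2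
    have hbr : (1-q)*Real.exp (-s) + q*Real.exp s - 1 ≤ -(s^2/2) := by
      rw [hqs]; nlinarith [hend]
    have hts2 : l * s^2 = t * s := by rw [← hls]; ring
    nlinarith [mul_le_mul_of_nonneg_left hexp (by linarith : (0:ℝ) ≤ 1 - q),
      mul_le_mul_of_nonneg_left hexp2 hq0,
      mul_le_mul_of_nonneg_left hbr hl0, hts2, hls]

set_option maxHeartbeats 2000000 in
/-- the majority vote with fair random tie-breaking has error probability at most
`exp(−(n/2)(α(1−2q))²)` when the average error probability `q` is less than `1/2`. -/
theorem majority_vote_error_bound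
    {Ω : Type*} [MeasurableSpace Ω] (μ : Measure Ω) [IsProbabilityMeasure μ]
    (n : ℕ) (hn : 2 < n) (α : ℝ) (hα : α ∈ Set.Ioc (0 : ℝ) 1)
    (p : Fin n → ℝ) (hp : ∀ i, p i ∈ Set.Icc (0 : ℝ) 1)
    (q : ℝ) (hq : q = (1 / (n : ℝ)) * ∑ i, p i) (hqlt : q < 1 / 2)
    (G : Ω → ℤ) (X : Fin n → Ω → ℤ) (Z : Ω → ℤ)
    (hGmeas : Measurable G) (hXmeas : ∀ i, Measurable (X i)) (hZmeas : Measurable Z)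
    (hGval : ∀ ω, G ω = 1 ∨ G ω = -1)
    (hXval : ∀ i ω, X i ω = -1 ∨ X i ω = 0 ∨ X i ω = 1)
    (hZval : ∀ ω, Z ω = 1 ∨ Z ω = -1)
    -- joint law of (G, X):
    (hlaw : ∀ (g : ℤ) (x : Fin n → ℤ), (g = 1 ∨ g = -1) →
      (∀ i, x i = -1 ∨ x i = 0 ∨ x i = 1) →
      μ {ω | G ω = g ∧ ∀ i, X i ω = x i} = ENNReal.ofReal (taskScore n α p g x))
    -- Z is uniform on {+1,−1} and independent of (G, X):
    (hZind : ∀ (z g : ℤ) (x : Fin n → ℤ), (z = 1 ∨ z = -1) →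
      μ {ω | Z ω = z ∧ G ω = g ∧ ∀ i, X i ω = x i}
        = (1 / 2 : ENNReal) * μ {ω | G ω = g ∧ ∀ i, X i ω = x i})
    -- the majority vote Ĝ with fair random tie-breaking, S = Σ_i X_i:
    (Ghat : Ω → ℤ)
    (hGhat : ∀ ω, Ghat ω =
      if 0 < ∑ i, X i ω then 1 else if (∑ i, X i ω) < 0 then -1 else Z ω) :
    μ {ω | Ghat ω ≠ G ω}
      ≤ ENNReal.ofReal (Real.exp (-((n : ℝ) / 2) * (α * (1 - 2 * q)) ^ 2)) := by
  obtain ⟨hα0, hα1⟩ := hα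
  -- finite configuration space
  set V : Finset ℤ := {-1, 0, 1} with hV
  set GS : Finset ℤ := {1, -1} with hGS
  set Xs : Finset (Fin n → ℤ) := Fintype.piFinset fun _ => V with hXs
  set S : Finset (ℤ × (Fin n → ℤ) × ℤ) := GS ×ˢ Xs ×ˢ GS with hS
  set maj : (Fin n → ℤ) → ℤ → ℤ :=
    fun x z => if 0 < ∑ i, x i then 1 else if (∑ i, x i) < 0 then -1 else z with hmaj
  set B : Finset (ℤ × (Fin n → ℤ) × ℤ) := S.filter (fun c => maj c.2.1 c.2.2 ≠ c.1) with hB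
  set A : ℤ × (Fin n → ℤ) × ℤ → Set Ω :=
    fun c => {ω | Z ω = c.2.2 ∧ G ω = c.1 ∧ ∀ i, X i ω = c.2.1 i} with hA
  -- covering
  have hcover : {ω | Ghat ω ≠ G ω} = ⋃ c ∈ B, A c := by
    ext ω
    simp only [Set.mem_setOf_eq, Set.mem_iUnion]
    constructor
    · intro hne
      refine ⟨(G ω, fun i => X i ω, Z ω), ?_, rfl, rfl, fun i => rfl⟩
      rw [hB, Finset.mem_filter]
      constructor
      · rw [hS, Finset.mem_product, Finset.mem_product]
        refine ⟨?_, ?_, ?_⟩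
        · simp only [hGS, Finset.mem_insert, Finset.mem_singleton]; exact hGval ω
        · rw [hXs, Fintype.mem_piFinset]
          intro i
          simp only [hV, Finset.mem_insert, Finset.mem_singleton]; exact hXval i ω
        · simp only [hGS, Finset.mem_insert, Finset.mem_singleton]; exact hZval ω
      · show maj (fun i => X i ω) (Z ω) ≠ G ω
        have : maj (fun i => X i ω) (Z ω) = Ghat ω := by rw [hGhat ω]
        rw [this]; exact hne
    · rintro ⟨c, hc, hz, hg, hx⟩
      rw [hB, Finset.mem_filter] at hc
      have hsum : ∑ i, X i ω = ∑ i, c.2.1 i := Finset.sum_congr rfl (fun i _ => hx i)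
      have : Ghat ω = maj c.2.1 c.2.2 := by rw [hGhat ω, hsum, hz]
      rw [this, hg]; exact hc.2
  -- disjointness
  have hdisj : (↑B : Set (ℤ × (Fin n → ℤ) × ℤ)).PairwiseDisjoint A := by
    intro c _ c' _ hne
    refine Set.disjoint_left.2 fun ω h1 h2 => hne ?_
    exact Prod.ext (h1.2.1.symm.trans h2.2.1)
      (Prod.ext (funext fun i => (h1.2.2 i).symm.trans (h2.2.2 i))
        (h1.1.symm.trans h2.1))
  -- measurability
  have hmeasA : ∀ c ∈ B, MeasurableSet (A c) := by
    intro c _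
    have : A c = Z ⁻¹' {c.2.2} ∩ (G ⁻¹' {c.1} ∩ ⋂ i, X i ⁻¹' {c.2.1 i}) := by
      ext ω; simp [hA, Set.mem_iInter]
    rw [this]
    exact (hZmeas (measurableSet_singleton _)).inter
      ((hGmeas (measurableSet_singleton _)).inter
        (MeasurableSet.iInter fun i => hXmeas i (measurableSet_singleton _)))
  have hW0 : ∀ (g : ℤ) (x : Fin n → ℤ), 0 ≤ taskScore n α p g x := by
    intro g x
    apply mul_nonneg (by norm_num)
    apply Finset.prod_nonneg
    intro i _
    rcases hp i with ⟨h1, h2⟩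
    split_ifs <;> nlinarith
  -- decompose the measure
  have hmu : μ {ω | Ghat ω ≠ G ω}
      = ENNReal.ofReal (∑ c ∈ B, (1/2) * taskScore n α p c.1 c.2.1) := by
    rw [hcover, measure_biUnion_finset hdisj hmeasA]
    rw [ENNReal.ofReal_sum_of_nonneg (fun c _ => by
      have := hW0 c.1 c.2.1; positivity)]
    apply Finset.sum_congr rfl
    intro c hc
    rw [hB, Finset.mem_filter, hS, Finset.mem_product, Finset.mem_product] at hc
    obtain ⟨⟨hg, hx, hz⟩, -⟩ := hc
    simp only [hGS, Finset.mem_insert, Finset.mem_singleton] at hg hz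
    rw [hXs, Fintype.mem_piFinset] at hx
    have hxv : ∀ i, c.2.1 i = -1 ∨ c.2.1 i = 0 ∨ c.2.1 i = 1 := by
      intro i; have := hx i
      simp only [hV, Finset.mem_insert, Finset.mem_singleton] at this; exact this
    have : μ (A c) = (1/2 : ENNReal) * ENNReal.ofReal (taskScore n α p c.1 c.2.1) := by
      rw [hA]
      show μ {ω | Z ω = c.2.2 ∧ G ω = c.1 ∧ ∀ i, X i ω = c.2.1 i} = _
      rw [hZind c.2.2 c.1 c.2.1 hz, hlaw c.1 c.2.1 hg hxv]
    rw [this, ENNReal.ofReal_mul (by norm_num : (0:ℝ) ≤ 1/2)]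
    congr 1
    rw [ENNReal.ofReal_div_of_pos (by norm_num)]; norm_num
  rw [hmu]
  apply ENNReal.ofReal_le_ofReal
  -- now a purely real inequality
  have hn0 : (0:ℝ) < n := by positivity
  have hq0 : 0 ≤ q := by
    rw [hq]
    apply mul_nonneg (by positivity)
    exact Finset.sum_nonneg fun i _ => (hp i).1
  have hsp : ∑ i, p i = (n:ℝ) * q := by
    rw [hq]; field_simp
  set t : ℝ := α * (1 - 2*q) with htdef
  clear_value t
  have ht0 : 0 < t := by
    rw [htdef]; apply mul_pos hα0; linarith
  have hts : t ≤ 1 - 2*q := by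
    rw [htdef]; nlinarith
  set m : Fin n → ℝ :=
    fun i => α*(1-p i)*Real.exp (-t) + α*(p i)*Real.exp t + (1-α) with hm
  clear_value m
  have hm0 : ∀ i, 0 ≤ m i := by
    intro i
    rcases hp i with ⟨h1, h2⟩
    have e1 := Real.exp_pos (-t)
    have e2 := Real.exp_pos t
    have a1 : 0 ≤ α*(1-p i)*Real.exp (-t) :=
      mul_nonneg (mul_nonneg hα0.le (by linarith)) e1.le
    have a2 : 0 ≤ α*(p i)*Real.exp t := mul_nonneg (mul_nonneg hα0.le h1) e2.le
    simp only [hm]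
    linarith
  -- per (g, x) Chernoff-type bound
  have key1 : ∀ g : ℤ, (g = 1 ∨ g = -1) → ∀ x : Fin n → ℤ,
      (∑ z ∈ GS, if maj x z ≠ g then (1/2)*taskScore n α p g x else 0)
        ≤ (1/2) * ∏ i, ((if x i = g then α*(1-p i) else if x i = -g then α*p i else 1-α)
            * Real.exp (-(t * (g:ℝ) * ((x i : ℤ):ℝ)))) := by
    intro g hg x
    rw [hGS, Finset.sum_pair (show (1:ℤ) ≠ -1 by decide)]
    set W : ℝ := ∏ i, (if x i = g then α*(1-p i) else if x i = -g then α*p i else 1-α) with hWdef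
    have hW : 0 ≤ W := by
      apply Finset.prod_nonneg
      intro i _
      rcases hp i with ⟨h1, h2⟩
      split_ifs <;> nlinarith
    have hTS : taskScore n α p g x = (1/2) * W := rfl
    clear_value W
    have hprod : ∏ i, ((if x i = g then α*(1-p i) else if x i = -g then α*p i else 1-α)
        * Real.exp (-(t * (g:ℝ) * ((x i : ℤ):ℝ))))
        = W * Real.exp (-(t * (g:ℝ) * ((∑ i, x i : ℤ):ℝ))) := by
      rw [Finset.prod_mul_distrib, ← Real.exp_sum, hWdef]
      congr 1
      push_cast
      rw [Finset.mul_sum, ← Finset.sum_neg_distrib]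
    rw [hprod, hTS]
    have hEpos : 0 < Real.exp (-(t * (g:ℝ) * ((∑ i, x i : ℤ):ℝ))) := Real.exp_pos _
    rcases hg with hg | hg <;> subst hg <;>
      rcases lt_trichotomy (∑ i, x i) 0 with hc | hc | hc
    · -- g = 1, sum < 0 : both tie-break values err
      have hmaj : ∀ z, maj x z = -1 := by
        intro z; simp only [hmaj]; rw [if_neg (by omega), if_pos hc]
      rw [hmaj 1, hmaj (-1)]
      have hcast : ∑ j, ((x j : ℤ):ℝ) < 0 := by
        have : ((∑ i, x i : ℤ):ℝ) < 0 := by exact_mod_cast hc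
        push_cast at this; exact this
      have hE1 : (1:ℝ) ≤ Real.exp (-(t * ∑ j, ((x j : ℤ):ℝ))) := by
        apply Real.one_le_exp; nlinarith
      norm_num
      push_cast
      nlinarith [mul_le_mul_of_nonneg_left hE1 hW]
    · -- g = 1, sum = 0 : only z = -1 errs
      have hmaj : ∀ z, maj x z = z := by
        intro z; simp only [hmaj]; rw [if_neg (by omega), if_neg (by omega)]
      rw [hmaj 1, hmaj (-1)]
      have hcast : ((∑ i, x i : ℤ):ℝ) = 0 := by exact_mod_cast hc
      rw [hcast]
      norm_num [Real.exp_zero]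
      nlinarith
    · -- g = 1, sum > 0 : no error
      have hmaj : ∀ z, maj x z = 1 := by
        intro z; simp only [hmaj]; rw [if_pos hc]
      rw [hmaj 1, hmaj (-1)]
      norm_num
      positivity
    · -- g = -1, sum < 0 : no error
      have hmaj : ∀ z, maj x z = -1 := by
        intro z; simp only [hmaj]; rw [if_neg (by omega), if_pos hc]
      rw [hmaj 1, hmaj (-1)]
      norm_num
      positivity
    · -- g = -1, sum = 0 : only z = 1 errs
      have hmaj : ∀ z, maj x z = z := by
        intro z; simp only [hmaj]; rw [if_neg (by omega), if_neg (by omega)]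
      rw [hmaj 1, hmaj (-1)]
      have hcast : ((∑ i, x i : ℤ):ℝ) = 0 := by exact_mod_cast hc
      rw [hcast]
      norm_num [Real.exp_zero]
      nlinarith
    · -- g = -1, sum > 0 : both err
      have hmaj : ∀ z, maj x z = 1 := by
        intro z; simp only [hmaj]; rw [if_pos hc]
      rw [hmaj 1, hmaj (-1)]
      have hcast : (0:ℝ) < ∑ j, ((x j : ℤ):ℝ) := by
        have : (0:ℝ) < ((∑ i, x i : ℤ):ℝ) := by exact_mod_cast hc
        push_cast at this; exact this
      have hE1 : (1:ℝ) ≤ Real.exp (t * ∑ j, ((x j : ℤ):ℝ)) := by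
        apply Real.one_le_exp; nlinarith
      norm_num
      push_cast
      nlinarith [mul_le_mul_of_nonneg_left hE1 hW]
  -- factorization of the moment generating function
  have key2 : ∀ g : ℤ, (g = 1 ∨ g = -1) →
      ∑ x ∈ Xs, ((1/2) * ∏ i, ((if x i = g then α*(1-p i) else if x i = -g then α*p i else 1-α)
            * Real.exp (-(t * (g:ℝ) * ((x i : ℤ):ℝ)))))
        = (1/2) * ∏ i, m i := by
    intro g hg
    have hfac : ∏ i : Fin n, ∑ v ∈ V, ((if v = g then α*(1-p i) else if v = -g then α*p i else 1-α)
          * Real.exp (-(t * (g:ℝ) * ((v:ℤ):ℝ))))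
        = ∑ x ∈ Fintype.piFinset (fun _ : Fin n => V),
            ∏ i, ((if x i = g then α*(1-p i) else if x i = -g then α*p i else 1-α)
              * Real.exp (-(t * (g:ℝ) * ((x i : ℤ):ℝ)))) := Finset.prod_univ_sum _ _
    rw [← Finset.mul_sum, hXs, ← hfac]
    congr 1
    apply Finset.prod_congr rfl
    intro i _
    rw [hV]
    rw [show ({-1,0,1} : Finset ℤ) = insert (-1) (insert 0 {1}) from rfl,
      Finset.sum_insert (by decide), Finset.sum_insert (by decide), Finset.sum_singleton]
    rcases hg with hg | hg <;> subst hg <;> simp only [hm] <;> norm_num <;> ring_nf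
  -- assemble
  have hstep1 : ∑ c ∈ B, (1/2) * taskScore n α p c.1 c.2.1
      = ∑ g ∈ GS, ∑ x ∈ Xs, ∑ z ∈ GS, (if maj x z ≠ g then (1/2)*taskScore n α p g x else 0) := by
    rw [hB, Finset.sum_filter, hS, Finset.sum_product]
    apply Finset.sum_congr rfl
    intro g _
    rw [Finset.sum_product]
  have hGmem : ∀ g ∈ GS, g = 1 ∨ g = -1 := by
    intro g hgm
    simpa only [hGS, Finset.mem_insert, Finset.mem_singleton] using hgm
  have hstep2 : ∑ c ∈ B, (1/2) * taskScore n α p c.1 c.2.1 ≤ ∏ i, m i := by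
    rw [hstep1]
    calc ∑ g ∈ GS, ∑ x ∈ Xs, ∑ z ∈ GS, (if maj x z ≠ g then (1/2)*taskScore n α p g x else 0)
        ≤ ∑ g ∈ GS, ∑ x ∈ Xs, ((1/2) * ∏ i, ((if x i = g then α*(1-p i)
            else if x i = -g then α*p i else 1-α) * Real.exp (-(t * (g:ℝ) * ((x i : ℤ):ℝ))))) := by
          apply Finset.sum_le_sum
          intro g hgm
          apply Finset.sum_le_sum
          intro x _
          exact key1 g (hGmem g hgm) x
      _ = ∑ g ∈ GS, (1/2) * ∏ i, m i := by
          apply Finset.sum_congr rfl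
          intro g hgm
          exact key2 g (hGmem g hgm)
      _ = ∏ i, m i := by
          rw [Finset.sum_const, hGS, Finset.card_pair (by decide), nsmul_eq_mul]
          push_cast; ring
  have hsum_m : ∑ i, (m i - 1) = (n:ℝ) * α * ((1-q)*Real.exp (-t) + q*Real.exp t - 1) := by
    have h1 : ∑ i, (m i - 1)
        = (∑ _i : Fin n, (α*Real.exp (-t) + (1-α) - 1))
            + (α*Real.exp t - α*Real.exp (-t)) * ∑ i, p i := by
      rw [Finset.mul_sum, ← Finset.sum_add_distrib]
      apply Finset.sum_congr rfl
      intro i _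
      simp only [hm]; ring
    rw [h1, Finset.sum_const, Finset.card_univ, Fintype.card_fin, nsmul_eq_mul, hsp]
    ring
  have hkey := key_ineq hq0 (le_of_lt hqlt) (le_of_lt ht0) hts
  have hfinal : ∑ i, (m i - 1) ≤ -((n:ℝ)/2) * t^2 := by
    rw [hsum_m]
    have hna : 0 ≤ (n:ℝ) * α := by positivity
    have := mul_le_mul_of_nonneg_left hkey hna
    calc (n:ℝ) * α * ((1-q)*Real.exp (-t) + q*Real.exp t - 1)
        ≤ (n:ℝ) * α * (-((1-2*q)*t/2)) := this
      _ = -((n:ℝ)/2) * t^2 := by rw [htdef]; ring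
  calc ∑ c ∈ B, (1/2) * taskScore n α p c.1 c.2.1 ≤ ∏ i, m i := hstep2
    _ ≤ ∏ i, Real.exp (m i - 1) := by
        apply Finset.prod_le_prod (fun i _ => hm0 i)
        intro i _
        linarith [Real.add_one_le_exp (m i - 1)]
    _ = Real.exp (∑ i, (m i - 1)) := (Real.exp_sum _ _).symm
    _ ≤ Real.exp (-((n:ℝ)/2) * t^2) := Real.exp_le_exp.2 hfinal
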